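/- Let μ be the Lebesgue measure restricted to [0,1] and let f : [0,1] → [0,∞) be a nondecreasing Borel measurable function. Then (S)∫_{[0,1]} f dμ ≤ √2 · ((S)∫_{[0,1]} f² dμ)^{1/4} · ((S)∫_{[0,1]} x² f(x)² dμ)^{1/4}. -/

import Mathlib

open scoped ENNReal

/-- The Sugeno integral of `f` on `A` with respect to the monotone set
function `μ`: `(S)∫_A f dμ = sup_{α ∈ [0,∞]} min(α, μ(A ∩ {f ≥ α}))`. -/
noncomputable def sugeno {X : Type*} (μ : Set X → ℝ≥0∞) (f : X → ℝ≥0∞)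
    (A : Set X) : ℝ≥0∞ :=
  ⨆ α : ℝ≥0∞, min α (μ (A ∩ {x | α ≤ f x}))

/-- Carlson type inequality for the Sugeno integral with respect to the
Lebesgue measure restricted to `[0,1]`, for a nondecreasing function `f`:
`(S)∫_{[0,1]} f dμ ≤ √2 ((S)∫_{[0,1]} f² dμ)^{1/4} ((S)∫_{[0,1]} x²f(x)² dμ)^{1/4}`. -/
theorem carlson_sugeno_lebesgue
    -- μ is the Lebesgue measure restricted to [0,1]
    (μ : Set ℝ → ℝ≥0∞)
    (hμ : ∀ B : Set ℝ, μ B = MeasureTheory.volume (B ∩ Set.Icc (0:ℝ) 1))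
    -- f : [0,1] → [0,∞) is a nondecreasing Borel measurable function
    (f : ℝ → ℝ≥0∞) (hf : Measurable f)
    (hmono : MonotoneOn f (Set.Icc (0:ℝ) 1))
    (hfin : ∀ x ∈ Set.Icc (0:ℝ) 1, f x ≠ ∞) :
    sugeno μ f (Set.Icc 0 1) ≤
      ENNReal.ofReal (Real.sqrt 2) *
        (sugeno μ (fun x => f x ^ 2) (Set.Icc 0 1)) ^ ((1:ℝ)/4) *
        (sugeno μ (fun x => ENNReal.ofReal x ^ 2 * f x ^ 2) (Set.Icc 0 1)) ^ ((1:ℝ)/4) := by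
  set I := Set.Icc (0:ℝ) 1 with hI
  -- S ≤ 1
  have hS1 : sugeno μ f I ≤ 1 := by
    refine iSup_le fun α => le_trans (min_le_right _ _) ?_
    rw [hμ]
    calc MeasureTheory.volume ((I ∩ {x | α ≤ f x}) ∩ I)
        ≤ MeasureTheory.volume I := MeasureTheory.measure_mono (by intro x hx; exact hx.2)
      _ = 1 := by simp [hI, Real.volume_Icc]
  refine le_of_forall_lt_imp_le_of_dense fun t ht => ?_
  rcases eq_or_ne t 0 with rfl | ht0
  · exact zero_le'
  have ht1 : t < 1 := lt_of_lt_of_le ht hS1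
  have htop : t ≠ ∞ := ht1.ne_top
  set r := t.toReal with hr
  have hrt : ENNReal.ofReal r = t := ENNReal.ofReal_toReal htop
  have hr0 : 0 < r := ENNReal.toReal_pos ht0 htop
  have hr1 : r ≤ 1 := by
    rw [← ENNReal.ofReal_one] at ht1
    have := ht1.le
    rw [← hrt, ENNReal.ofReal_le_ofReal_iff zero_le_one] at this
    exact this
  -- extract α
  rw [sugeno, lt_iSup_iff] at ht
  obtain ⟨α, hα⟩ := ht
  rw [lt_min_iff] at hα
  obtain ⟨htα, htm⟩ := hα
  rw [hμ] at htm
  set E := (I ∩ {x | α ≤ f x}) ∩ I with hE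
  -- first bound: t^2 ≤ sugeno f^2
  have hA : t ^ 2 ≤ sugeno μ (fun x => f x ^ 2) I := by
    refine le_trans ?_ (le_iSup (fun β => min β (μ (I ∩ {x | β ≤ f x ^ 2}))) (α ^ 2))
    refine le_min (by gcongr) ?_
    rw [hμ]
    calc t ^ 2 ≤ t := by
          nth_rewrite 2 [← one_mul t]
          rw [sq]
          exact mul_le_mul_left ht1.le t
      _ ≤ MeasureTheory.volume E := htm.le
      _ ≤ _ := by
          refine MeasureTheory.measure_mono ?_
          rintro x ⟨⟨hxI, hx⟩, hxI'⟩
          exact ⟨⟨hxI, by simp only [Set.mem_setOf_eq] at hx ⊢; gcongr⟩, hxI'⟩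
  -- every point of (1-r, 1] is in the level set
  have hlevel : ∀ x ∈ Set.Ioc (1 - r) 1, α ≤ f x := by
    intro x hx
    by_contra hfx
    push_neg at hfx
    have hxI : x ∈ I := ⟨by nlinarith [hx.1, hr1], hx.2⟩
    have hEsub : E ⊆ Set.Ioc x 1 := by
      rintro y ⟨⟨hyI, hy⟩, -⟩
      simp only [Set.mem_setOf_eq] at hy
      refine ⟨?_, hyI.2⟩
      by_contra hyx
      push_neg at hyx
      exact absurd (le_trans hy (hmono hyI hxI hyx)) (not_le.mpr hfx)
    have h1 : MeasureTheory.volume E ≤ ENNReal.ofReal (1 - x) :=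
      le_trans (MeasureTheory.measure_mono hEsub) (by rw [Real.volume_Ioc])
    have h2 : ENNReal.ofReal (1 - x) < t := by
      rw [← hrt]
      exact ENNReal.ofReal_lt_ofReal_iff hr0 |>.mpr (by linarith [hx.1])
    exact absurd (lt_of_le_of_lt h1 h2) (not_lt.mpr htm.le)
  -- second bound: t^2/4 ≤ sugeno x^2 f^2
  have hB : t ^ 2 / 4 ≤ sugeno μ (fun x => ENNReal.ofReal x ^ 2 * f x ^ 2) I := by
    refine le_trans ?_ (le_iSup
      (fun β => min β (μ (I ∩ {x | β ≤ ENNReal.ofReal x ^ 2 * f x ^ 2}))) (t ^ 2 / 4))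
    refine le_min le_rfl ?_
    rw [hμ]
    have hsub : Set.Ioc (1 - r / 2) 1 ⊆
        (I ∩ {x | t ^ 2 / 4 ≤ ENNReal.ofReal x ^ 2 * f x ^ 2}) ∩ I := by
      intro x hx
      have hxI : x ∈ I := ⟨by nlinarith [hx.1, hr1], hx.2⟩
      have hxhalf : (1:ℝ)/2 ≤ x := by nlinarith [hx.1, hr1]
      have hfx : α ≤ f x := hlevel x ⟨by linarith [hx.1], hx.2⟩
      have hkey : t ^ 2 / 4 ≤ ENNReal.ofReal x ^ 2 * f x ^ 2 := by
        have hhalf : ENNReal.ofReal (1/2 : ℝ) = 2⁻¹ := by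
          rw [ENNReal.ofReal_div_of_pos (by norm_num), ENNReal.ofReal_one,
            ENNReal.ofReal_ofNat, one_div]
        have h4 : t ^ 2 / 4 = ENNReal.ofReal (1/2) ^ 2 * t ^ 2 := by
          rw [hhalf, div_eq_mul_inv, mul_comm, ← ENNReal.inv_pow]
          norm_num
        rw [h4]
        gcongr <;>
          first
            | exact ENNReal.ofReal_le_ofReal hxhalf
            | exact le_trans htα.le hfx
      exact ⟨⟨hxI, hkey⟩, hxI⟩
    calc t ^ 2 / 4 ≤ t / 2 := by
          rw [sq]
          calc t * t / 4 ≤ 1 * t / 4 := by gcongr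
            _ = t / 4 := by rw [one_mul]
            _ ≤ t / 2 := ENNReal.div_le_div_left (by norm_num) t
      _ = ENNReal.ofReal (r / 2) := by
          rw [ENNReal.ofReal_div_of_pos (by norm_num), hrt, ENNReal.ofReal_ofNat]
      _ = MeasureTheory.volume (Set.Ioc (1 - r / 2) 1) := by
          rw [Real.volume_Ioc]; congr 1; ring
      _ ≤ _ := MeasureTheory.measure_mono hsub
  -- final computation
  have hfinal : t = ENNReal.ofReal (Real.sqrt 2) * (t ^ 2) ^ ((1:ℝ)/4) *
      (t ^ 2 / 4) ^ ((1:ℝ)/4) := by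
    have h2 : ENNReal.ofReal (Real.sqrt 2) = (2 : ℝ≥0∞) ^ ((1:ℝ)/2) := by
      rw [Real.sqrt_eq_rpow, ← ENNReal.ofReal_rpow_of_pos (by norm_num)]
      norm_num
    have ht2 : (t ^ 2) ^ ((1:ℝ)/4) = t ^ ((1:ℝ)/2) := by
      rw [← ENNReal.rpow_natCast t 2, ← ENNReal.rpow_mul]
      norm_num
    have ht4 : (t ^ 2 / 4) ^ ((1:ℝ)/4) = t ^ ((1:ℝ)/2) * (2 : ℝ≥0∞) ^ (-(1:ℝ)/2) := by
      rw [div_eq_mul_inv, ENNReal.mul_rpow_of_nonneg _ _ (by norm_num), ht2]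
      congr 1
      rw [← ENNReal.rpow_neg_one (4 : ℝ≥0∞), ← ENNReal.rpow_mul]
      have : (4 : ℝ≥0∞) = (2 : ℝ≥0∞) ^ (2:ℝ) := by
        rw [show (2:ℝ) = ((2:ℕ):ℝ) by norm_num, ENNReal.rpow_natCast]; norm_num
      rw [this, ← ENNReal.rpow_mul]
      norm_num
    rw [h2, ht2, ht4]
    rw [show (2:ℝ≥0∞) ^ ((1:ℝ)/2) * t ^ ((1:ℝ)/2) * (t ^ ((1:ℝ)/2) * (2:ℝ≥0∞) ^ (-(1:ℝ)/2))
      = ((2:ℝ≥0∞) ^ ((1:ℝ)/2) * (2:ℝ≥0∞) ^ (-(1:ℝ)/2)) * (t ^ ((1:ℝ)/2) * t ^ ((1:ℝ)/2))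
      by ring]
    rw [← ENNReal.rpow_add _ _ (by norm_num) (by norm_num),
      ← ENNReal.rpow_add _ _ ht0 htop]
    norm_num
  calc t = _ := hfinal
    _ ≤ _ := by gcongr <;> norm_num
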